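/- Let g be a positive definite form of degree d on ℝⁿ, G = {g ≤ 1}, and let μ_g denote Lebesgue measure restricted to G. Then for every degree-d form h with ‖h‖_{L¹(μ_g)} = ‖g‖_{L¹(μ_g)}, one has ‖h‖_{L²(μ_g)} ≥ ‖g‖_{L²(μ_g)}; moreover equality holds only if h = g or h = -g. -/

import Mathlib

open MeasureTheory MvPolynomial Pointwise

lemma evalSmulHom {n d : ℕ} {p : MvPolynomial (Fin n) ℝ} (hp : p.IsHomogeneous d)
    (t : ℝ) (x : Fin n → ℝ) : eval (t • x) p = t ^ d * eval x p := by
  rw [eval_eq, eval_eq, Finset.mul_sum]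
  refine Finset.sum_congr rfl fun m hm => ?_
  have hdeg : ∑ i ∈ m.support, m i = d := by
    have := hp (MvPolynomial.mem_support_iff.mp hm)
    simpa [Finsupp.weight_apply, Finsupp.sum] using this
  have : ∏ i ∈ m.support, (t • x) i ^ m i
      = t ^ d * ∏ i ∈ m.support, x i ^ m i := by
    simp only [Pi.smul_apply, smul_eq_mul, mul_pow]
    rw [Finset.prod_mul_distrib, Finset.prod_pow_eq_pow_sum, hdeg]
  rw [this]; ring

lemma evalZeroHom {n d : ℕ} {p : MvPolynomial (Fin n) ℝ} (hp : p.IsHomogeneous d)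
    (hd : 1 ≤ d) : eval (0 : Fin n → ℝ) p = 0 := by
  have := evalSmulHom hp 0 0
  simpa [zero_pow (by omega : d ≠ 0)] using this

lemma Gcompact {n d : ℕ} (hn : 1 ≤ n) (hd : 1 ≤ d) {g : MvPolynomial (Fin n) ℝ}
    (hg : g.IsHomogeneous d) (hgpos : ∀ x : Fin n → ℝ, x ≠ 0 → 0 < eval x g) :
    IsCompact {x : Fin n → ℝ | eval x g ≤ 1} := by
  have hcont : Continuous fun x : Fin n → ℝ => eval x g := MvPolynomial.continuous_eval g
  have hclosed : IsClosed {x : Fin n → ℝ | eval x g ≤ 1} :=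
    isClosed_le hcont continuous_const
  haveI : Nontrivial (Fin n → ℝ) := by
    refine ⟨0, fun _ => 1, fun hcon => ?_⟩
    have := congrFun hcon ⟨0, hn⟩
    norm_num at this
  have hsph : (Metric.sphere (0 : Fin n → ℝ) 1).Nonempty :=
    NormedSpace.sphere_nonempty.2 zero_le_one
  obtain ⟨x₀, hx₀, hmin⟩ := (isCompact_sphere (0 : Fin n → ℝ) 1).exists_isMinOn hsph
    hcont.continuousOn
  have hx₀norm : ‖x₀‖ = 1 := by simpa using hx₀
  have hx₀ne : x₀ ≠ 0 := by
    intro hcon; rw [hcon] at hx₀norm; simp at hx₀norm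
  set m := eval x₀ g with hm
  have hmpos : 0 < m := hgpos x₀ hx₀ne
  have hbound : ∀ x ∈ {x : Fin n → ℝ | eval x g ≤ 1}, ‖x‖ ≤ max 1 (1 / m) := by
    intro x hx
    rcases eq_or_ne x 0 with rfl | hxne
    · simp
    have hxnorm : 0 < ‖x‖ := norm_pos_iff.2 hxne
    have hu : ‖(‖x‖⁻¹ • x)‖ = 1 := by
      rw [norm_smul, norm_inv, norm_norm, inv_mul_cancel₀ hxnorm.ne']
    have hge : m ≤ eval (‖x‖⁻¹ • x) g := hmin (by simpa using hu)
    have hxval : eval x g = ‖x‖ ^ d * eval (‖x‖⁻¹ • x) g := by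
      have := evalSmulHom hg ‖x‖ (‖x‖⁻¹ • x)
      rw [smul_smul, mul_inv_cancel₀ hxnorm.ne', one_smul] at this
      linarith [this]
    have h1 : ‖x‖ ^ d * m ≤ 1 := by
      calc ‖x‖ ^ d * m ≤ ‖x‖ ^ d * eval (‖x‖⁻¹ • x) g := by
            exact mul_le_mul_of_nonneg_left hge (by positivity)
        _ = eval x g := hxval.symm
        _ ≤ 1 := hx
    rcases le_or_gt ‖x‖ 1 with h | h
    · exact le_max_of_le_left h
    · have hxd : ‖x‖ ≤ ‖x‖ ^ d := le_self_pow₀ h.le (by omega)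
      have : ‖x‖ ^ d ≤ 1 / m := by
        rw [le_div_iff₀ hmpos]; exact h1
      exact le_max_of_le_right (hxd.trans this)
  exact (isCompact_closedBall (0 : Fin n → ℝ) (max 1 (1 / m))).of_isClosed_subset hclosed
    (fun x hx => by simpa [Metric.mem_closedBall, dist_zero_right] using hbound x hx)

lemma scaleInt {n d m : ℕ} (hd : 1 ≤ d) {g : MvPolynomial (Fin n) ℝ}
    (hg : g.IsHomogeneous d) (F : (Fin n → ℝ) → ℝ)
    (hF : ∀ t : ℝ, 0 ≤ t → ∀ x, F (t • x) = t ^ m * F x)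
    {c : ℝ} (hc : 0 < c) :
    ∫ x in {x : Fin n → ℝ | eval x g ≤ c ^ d}, F x
      = c ^ (n + m) * ∫ x in {x : Fin n → ℝ | eval x g ≤ 1}, F x := by
  have hfr : Module.finrank ℝ (Fin n → ℝ) = n := Module.finrank_fin_fun ℝ
  have hset : c • {x : Fin n → ℝ | eval x g ≤ 1} = {x : Fin n → ℝ | eval x g ≤ c ^ d} := by
    ext y
    rw [Set.mem_smul_set_iff_inv_smul_mem₀ hc.ne']
    simp only [Set.mem_setOf_eq]
    rw [evalSmulHom hg, inv_pow]
    have hcd : (0:ℝ) < c ^ d := pow_pos hc d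
    rw [inv_mul_le_iff₀ hcd, mul_one]
  have h1 : ∫ x in {x : Fin n → ℝ | eval x g ≤ 1}, F (c • x)
      = (c ^ n)⁻¹ • ∫ x in {x : Fin n → ℝ | eval x g ≤ c ^ d}, F x := by
    have h0 := Measure.setIntegral_comp_smul_of_pos volume F {x : Fin n → ℝ | eval x g ≤ 1} hc
    rw [hfr, hset] at h0
    exact h0
  have h2 : ∫ x in {x : Fin n → ℝ | eval x g ≤ 1}, F (c • x)
      = c ^ m * ∫ x in {x : Fin n → ℝ | eval x g ≤ 1}, F x := by
    simp_rw [hF c hc.le]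
    exact integral_const_mul _ _
  rw [h2] at h1
  have hcn : (0:ℝ) < c ^ n := pow_pos hc n
  rw [smul_eq_mul] at h1
  rw [pow_add]
  field_simp at h1 ⊢
  linarith [h1]

lemma keyIdentity {n d : ℕ} (hn : 1 ≤ n) (hd : 1 ≤ d) {g : MvPolynomial (Fin n) ℝ}
    (hg : g.IsHomogeneous d) (hgpos : ∀ x : Fin n → ℝ, x ≠ 0 → 0 < eval x g)
    (F : (Fin n → ℝ) → ℝ) (hFc : Continuous F)
    (hF : ∀ t : ℝ, 0 ≤ t → ∀ x, F (t • x) = t ^ d * F x) :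
    ∫ x in {x : Fin n → ℝ | eval x g ≤ 1}, F x * eval x g
      = (((n : ℝ) + d) / ((n : ℝ) + 2 * d))
        * ∫ x in {x : Fin n → ℝ | eval x g ≤ 1}, F x := by
  have hgc : Continuous fun x : Fin n → ℝ => eval x g := MvPolynomial.continuous_eval g
  set G := {x : Fin n → ℝ | eval x g ≤ 1} with hGdef
  have hGm : MeasurableSet G := (isClosed_le hgc continuous_const).measurableSet
  have hGc : IsCompact G := Gcompact hn hd hg hgpos
  have hgnn : ∀ x : Fin n → ℝ, 0 ≤ eval x g := by
    intro x
    rcases eq_or_ne x 0 with rfl | hx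
    · rw [evalZeroHom hg hd]
    · exact (hgpos x hx).le
  set I := ∫ x in G, F x with hI
  set A : Set (ℝ × (Fin n → ℝ)) := {q | eval q.2 g ≤ q.1} with hA
  have hAm : MeasurableSet A :=
    (isClosed_le (hgc.comp continuous_snd) continuous_fst).measurableSet
  set K : ℝ × (Fin n → ℝ) → ℝ := A.indicator (fun q => F q.2) with hK
  haveI : IsFiniteMeasure (volume.restrict G) :=
    ⟨by rw [Measure.restrict_apply_univ]; exact hGc.measure_lt_top⟩
  haveI : IsFiniteMeasure (volume.restrict (Set.Ioc (0:ℝ) 1)) :=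
    ⟨by rw [Measure.restrict_apply_univ, Real.volume_Ioc]; simp⟩
  obtain ⟨C, hC⟩ := hGc.exists_bound_of_continuousOn hFc.continuousOn
  have hKint : Integrable K
      ((volume.restrict (Set.Ioc (0:ℝ) 1)).prod (volume.restrict G)) := by
    refine Integrable.mono' (integrable_const C)
      ((hFc.comp continuous_snd).stronglyMeasurable.indicator hAm).aestronglyMeasurable ?_
    rw [Measure.prod_restrict]
    filter_upwards [ae_restrict_mem (measurableSet_Ioc.prod hGm)] with q hq
    calc ‖K q‖ ≤ ‖F q.2‖ := norm_indicator_le_norm_self _ _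
      _ ≤ C := hC q.2 hq.2
  have hswap := MeasureTheory.integral_integral_swap
    (f := fun s x => K (s, x)) (μ := volume.restrict (Set.Ioc (0:ℝ) 1))
    (ν := volume.restrict G) hKint
  set β : ℝ := ((n : ℝ) + d) / d with hβ
  have hdR : (0:ℝ) < (d : ℝ) := by exact_mod_cast hd
  have hβpos : 0 < β := by positivity
  have hinner1 : ∀ s ∈ Set.Ioc (0:ℝ) 1, (∫ x in G, K (s, x)) = s ^ β * I := by
    intro s hs
    have hfun : (fun x => K (s, x)) = Set.indicator {x | eval x g ≤ s} F := by
      ext x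
      simp only [hK, Set.indicator_apply, hA, Set.mem_setOf_eq]
    have hsm : MeasurableSet {x : Fin n → ℝ | eval x g ≤ s} :=
      (isClosed_le hgc continuous_const).measurableSet
    rw [hfun, setIntegral_indicator hsm]
    have hsub : G ∩ {x : Fin n → ℝ | eval x g ≤ s} = {x : Fin n → ℝ | eval x g ≤ s} := by
      apply Set.inter_eq_right.mpr
      intro x hx
      exact le_trans hx hs.2
    rw [hsub]
    set c := s ^ ((d:ℝ)⁻¹) with hc
    have hcpos : 0 < c := Real.rpow_pos_of_pos hs.1 _
    have hcd : c ^ d = s := by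
      rw [← Real.rpow_natCast c d, hc, ← Real.rpow_mul hs.1.le,
        inv_mul_cancel₀ hdR.ne', Real.rpow_one]
    calc ∫ x in {x : Fin n → ℝ | eval x g ≤ s}, F x = c ^ (n + d) * I := by
          rw [← hcd]; exact scaleInt hd hg F hF hcpos
      _ = s ^ β * I := by
          congr 1
          rw [← Real.rpow_natCast c (n+d), hc, ← Real.rpow_mul hs.1.le]
          congr 1
          rw [hβ]
          push_cast
          field_simp
  have hLHS : (∫ s in Set.Ioc (0:ℝ) 1, ∫ x in G, K (s, x))
      = (1 / (β + 1)) * I := by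
    rw [setIntegral_congr_fun measurableSet_Ioc hinner1]
    rw [MeasureTheory.integral_mul_const]
    have : (∫ s in Set.Ioc (0:ℝ) 1, s ^ β) = ∫ s in (0:ℝ)..1, s ^ β :=
      (intervalIntegral.integral_of_le zero_le_one).symm
    rw [this, integral_rpow (Or.inl (by linarith))]
    rw [Real.one_rpow, Real.zero_rpow (by linarith)]
    ring
  have hinner2 : ∀ x ∈ G, (∫ s in Set.Ioc (0:ℝ) 1, K (s, x)) = F x * (1 - eval x g) := by
    intro x hx
    have hfun : (fun s => K (s, x)) = Set.indicator (Set.Ici (eval x g)) (fun _ => F x) := by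
      ext s
      simp only [hK, Set.indicator_apply, hA, Set.mem_setOf_eq, Set.mem_Ici]
    rw [hfun, setIntegral_indicator measurableSet_Ici, setIntegral_const]
    have ha0 : 0 ≤ eval x g := hgnn x
    have ha1 : eval x g ≤ 1 := hx
    have hvol : (volume (Set.Ioc (0:ℝ) 1 ∩ Set.Ici (eval x g))).toReal = 1 - eval x g := by
      rcases eq_or_lt_of_le ha0 with h0 | h0
      · have hin : Set.Ioc (0:ℝ) 1 ∩ Set.Ici (eval x g) = Set.Ioc 0 1 := by
          rw [Set.inter_eq_left]
          intro s hs
          rw [Set.mem_Ici, ← h0]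
          exact hs.1.le
        rw [hin, Real.volume_Ioc, ← h0]
        simp
      · have hin : Set.Ioc (0:ℝ) 1 ∩ Set.Ici (eval x g) = Set.Icc (eval x g) 1 := by
          ext s
          constructor
          · rintro ⟨⟨_, h1⟩, h2⟩; exact ⟨h2, h1⟩
          · rintro ⟨h2, h1⟩; exact ⟨⟨lt_of_lt_of_le h0 h2, h1⟩, h2⟩
        rw [hin, Real.volume_Icc, ENNReal.toReal_ofReal (by linarith)]
    rw [measureReal_def, hvol, smul_eq_mul]
    ring
  have hF1 : IntegrableOn F G := hFc.continuousOn.integrableOn_compact hGc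
  have hF2 : IntegrableOn (fun x => F x * eval x g) G :=
    (hFc.mul hgc).continuousOn.integrableOn_compact hGc
  have hRHS : (∫ x in G, ∫ s in Set.Ioc (0:ℝ) 1, K (s, x))
      = I - ∫ x in G, F x * eval x g := by
    rw [setIntegral_congr_fun hGm hinner2]
    have heq : (fun x => F x * (1 - eval x g)) = fun x => F x - F x * eval x g := by
      ext x; ring
    rw [heq, integral_sub hF1 hF2]
  rw [hLHS, hRHS] at hswap
  have hden : (0:ℝ) < (n:ℝ) + 2 * d := by positivity
  have hb1 : β + 1 = ((n:ℝ) + 2 * d) / d := by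
    rw [hβ]; field_simp; ring
  rw [hb1] at hswap
  have h1 : (1:ℝ) / (((n:ℝ) + 2 * d) / d) = (d:ℝ) / ((n:ℝ) + 2 * d) := by
    field_simp
  rw [h1] at hswap
  have h2 : ∫ x in G, F x * eval x g = I - (d:ℝ) / ((n:ℝ) + 2 * d) * I := by linarith
  rw [h2]
  field_simp
  ring

theorem stmt10 (n d : ℕ) (hn : 1 ≤ n) (hd : 1 ≤ d)
    (g h : MvPolynomial (Fin n) ℝ) (hg : g.IsHomogeneous d)
    (hgpos : ∀ x : Fin n → ℝ, x ≠ 0 → 0 < eval x g)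
    (hh : h.IsHomogeneous d)
    (hL1 : ∫ x in {x : Fin n → ℝ | eval x g ≤ 1}, |eval x h|
         = ∫ x in {x : Fin n → ℝ | eval x g ≤ 1}, |eval x g|) :
    Real.sqrt (∫ x in {x : Fin n → ℝ | eval x g ≤ 1}, |eval x g| ^ 2)
      ≤ Real.sqrt (∫ x in {x : Fin n → ℝ | eval x g ≤ 1}, |eval x h| ^ 2) ∧
    (Real.sqrt (∫ x in {x : Fin n → ℝ | eval x g ≤ 1}, |eval x h| ^ 2)
        = Real.sqrt (∫ x in {x : Fin n → ℝ | eval x g ≤ 1}, |eval x g| ^ 2)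
      → h = g ∨ h = -g) := by
  have hgc : Continuous fun x : Fin n → ℝ => eval x g := MvPolynomial.continuous_eval g
  have hhc : Continuous fun x : Fin n → ℝ => eval x h := MvPolynomial.continuous_eval h
  set G := {x : Fin n → ℝ | eval x g ≤ 1} with hGdef
  have hGm : MeasurableSet G := (isClosed_le hgc continuous_const).measurableSet
  have hGc : IsCompact G := Gcompact hn hd hg hgpos
  have hgnn : ∀ x : Fin n → ℝ, 0 ≤ eval x g := by
    intro x
    rcases eq_or_ne x 0 with rfl | hx
    · rw [evalZeroHom hg hd]
    · exact (hgpos x hx).le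
  set β : ℝ := ((n : ℝ) + d) / ((n : ℝ) + 2 * d) with hβ
  have hFh : ∀ t : ℝ, 0 ≤ t → ∀ x : Fin n → ℝ,
      |eval (t • x) h| = t ^ d * |eval x h| := by
    intro t ht x
    rw [evalSmulHom hh, abs_mul, abs_pow, abs_of_nonneg ht]
  have hKh := keyIdentity hn hd hg hgpos (fun x => |eval x h|) hhc.abs hFh
  have hKg := keyIdentity hn hd hg hgpos (fun x => eval x g) hgc
    (fun t ht x => evalSmulHom hg t x)
  have habsg : ∀ x : Fin n → ℝ, |eval x g| = eval x g := fun x => abs_of_nonneg (hgnn x)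
  have hL1' : ∫ x in G, |eval x h| = ∫ x in G, eval x g := by
    rw [hL1]
    simp only [habsg]
  -- integrabilities
  have ih2 : IntegrableOn (fun x : Fin n → ℝ => |eval x h| ^ 2) G :=
    (hhc.abs.pow 2).continuousOn.integrableOn_compact hGc
  have ihg : IntegrableOn (fun x : Fin n → ℝ => |eval x h| * eval x g) G :=
    (hhc.abs.mul hgc).continuousOn.integrableOn_compact hGc
  have igg : IntegrableOn (fun x : Fin n → ℝ => eval x g * eval x g) G :=
    (hgc.mul hgc).continuousOn.integrableOn_compact hGc
  have hQint : IntegrableOn (fun x : Fin n → ℝ => (|eval x h| - eval x g) ^ 2) G :=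
    ((hhc.abs.sub hgc).pow 2).continuousOn.integrableOn_compact hGc
  have hI2g : ∫ x in G, |eval x g| ^ 2 = β * ∫ x in G, eval x g := by
    have : ∀ x : Fin n → ℝ, |eval x g| ^ 2 = eval x g * eval x g := by
      intro x; rw [habsg]; ring
    simp only [this]
    exact hKg
  have hJhg : ∫ x in G, |eval x h| * eval x g = β * ∫ x in G, eval x g := by
    rw [hKh, hL1']
  have hQ : ∫ x in G, (|eval x h| - eval x g) ^ 2
      = (∫ x in G, |eval x h| ^ 2) - β * ∫ x in G, eval x g := by
    have hexp : ∀ x : Fin n → ℝ, (|eval x h| - eval x g) ^ 2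
        = |eval x h| ^ 2 - (2 * (|eval x h| * eval x g) - eval x g * eval x g) := by
      intro x; ring
    simp only [hexp]
    have hkint : IntegrableOn
        (fun x : Fin n → ℝ => 2 * (|eval x h| * eval x g) - eval x g * eval x g) G :=
      ((continuous_const.mul (hhc.abs.mul hgc)).sub
        (hgc.mul hgc)).continuousOn.integrableOn_compact hGc
    have h2int : IntegrableOn (fun x : Fin n → ℝ => 2 * (|eval x h| * eval x g)) G :=
      ihg.const_mul 2
    rw [integral_sub ih2 hkint, integral_sub h2int igg,
      MeasureTheory.integral_const_mul, hJhg, hKg]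
    ring
  have hQnn : 0 ≤ ∫ x in G, (|eval x h| - eval x g) ^ 2 :=
    setIntegral_nonneg hGm fun x _ => sq_nonneg _
  have hle : ∫ x in G, |eval x g| ^ 2 ≤ ∫ x in G, |eval x h| ^ 2 := by
    rw [hI2g]; linarith
  refine ⟨Real.sqrt_le_sqrt hle, ?_⟩
  intro heq
  have hI2hnn : 0 ≤ ∫ x in G, |eval x h| ^ 2 :=
    setIntegral_nonneg hGm fun x _ => sq_nonneg _
  have hI2gnn : 0 ≤ ∫ x in G, |eval x g| ^ 2 :=
    setIntegral_nonneg hGm fun x _ => sq_nonneg _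
  have hEqI : ∫ x in G, |eval x h| ^ 2 = ∫ x in G, |eval x g| ^ 2 := by
    rw [← Real.sq_sqrt hI2hnn, ← Real.sq_sqrt hI2gnn, heq]
  have hQ0 : ∫ x in G, (|eval x h| - eval x g) ^ 2 = 0 := by
    rw [hQ, ← hI2g, hEqI]; ring
  have hae : (fun x : Fin n → ℝ => (|eval x h| - eval x g) ^ 2)
      =ᵐ[volume.restrict G] 0 :=
    (integral_eq_zero_iff_of_nonneg (fun x => sq_nonneg _) hQint).mp hQ0
  have hae2 : ∀ᵐ x ∂(volume.restrict G), (eval x h) ^ 2 = (eval x g) ^ 2 := by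
    filter_upwards [hae] with x hx
    have hx0 : (|eval x h| - eval x g) ^ 2 = 0 := hx
    have habseq : |eval x h| = eval x g := by
      have := sq_eq_zero_iff.mp hx0
      linarith
    calc (eval x h) ^ 2 = |eval x h| ^ 2 := (sq_abs _).symm
      _ = (eval x g) ^ 2 := by rw [habseq]
  set S := {x : Fin n → ℝ | (eval x h) ^ 2 ≠ (eval x g) ^ 2} with hS
  have hSopen : IsOpen S := isOpen_ne_fun (hhc.pow 2) (hgc.pow 2)
  have hS0 : volume (S ∩ G) = 0 := by
    have := ae_iff.mp hae2
    rwa [Measure.restrict_apply hSopen.measurableSet] at this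
  have h0g : eval (0 : Fin n → ℝ) g = 0 := evalZeroHom hg hd
  obtain ⟨δ, hδpos, hδ⟩ := Metric.continuousAt_iff.mp hgc.continuousAt (1 : ℝ) one_pos
  have hball : Metric.ball (0 : Fin n → ℝ) δ ⊆ G := by
    intro x hx
    have := hδ (Metric.mem_ball.mp hx)
    rw [h0g, Real.dist_eq, sub_zero] at this
    exact le_of_lt (lt_of_le_of_lt (le_abs_self _) this)
  have hballeq : ∀ x ∈ Metric.ball (0 : Fin n → ℝ) δ,
      (eval x h) ^ 2 = (eval x g) ^ 2 := by
    intro x hx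
    by_contra hne
    have hmem : x ∈ S ∩ Metric.ball (0 : Fin n → ℝ) δ := ⟨hne, hx⟩
    have hpos : 0 < volume (S ∩ Metric.ball (0 : Fin n → ℝ) δ) :=
      (hSopen.inter Metric.isOpen_ball).measure_pos volume ⟨x, hmem⟩
    have hsub : S ∩ Metric.ball (0 : Fin n → ℝ) δ ⊆ S ∩ G :=
      Set.inter_subset_inter_right S hball
    have : volume (S ∩ Metric.ball (0 : Fin n → ℝ) δ) ≤ 0 := hS0 ▸ measure_mono hsub
    exact absurd (le_antisymm this zero_le) hpos.ne'
  have hall : ∀ x : Fin n → ℝ, (eval x h) ^ 2 = (eval x g) ^ 2 := by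
    intro x
    rcases eq_or_ne x 0 with rfl | hx
    · rw [evalZeroHom hh hd, evalZeroHom hg hd]
    · have hxn : 0 < ‖x‖ := norm_pos_iff.2 hx
      set t := (δ / 2) / ‖x‖ with ht
      have htpos : 0 < t := by positivity
      have hmem : t • x ∈ Metric.ball (0 : Fin n → ℝ) δ := by
        rw [Metric.mem_ball, dist_zero_right, norm_smul, Real.norm_eq_abs,
          abs_of_pos htpos, ht, div_mul_cancel₀ _ hxn.ne']
        linarith
      have hsq := hballeq _ hmem
      rw [evalSmulHom hh, evalSmulHom hg, mul_pow, mul_pow] at hsq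
      have hne : (t ^ d) ^ 2 ≠ 0 := by positivity
      exact mul_left_cancel₀ hne hsq
  have hpol : h ^ 2 = g ^ 2 := MvPolynomial.funext fun x => by
    rw [map_pow, map_pow]; exact hall x
  have hfactor : (h - g) * (h + g) = 0 := by
    have hring : (h - g) * (h + g) = h ^ 2 - g ^ 2 := by ring
    rw [hring, hpol, sub_self]
  rcases mul_eq_zero.mp hfactor with h1 | h1
  · exact Or.inl (sub_eq_zero.mp h1)
  · exact Or.inr (eq_neg_of_add_eq_zero_left h1)
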